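/- Let A, J be real n x n matrices (J possibly rectangular n x m), let M_hat be an n x n symmetric positive definite matrix, let W be an m x m symmetric positive definite matrix, and let beta, tau > 0. Define S = A M_hat^{-1} A^T + (1/(beta*tau)) J W^{-1} J^T and S_hat = (A + M1) M_hat^{-1} (A^T + M1^T), where M1 = (1/sqrt(beta*tau)) (J W^{-1} J^T)^{1/2} M_hat^{1/2}. Then for every vector v with S_hat v != 0, the Rayleigh quotient (v^T S v)/(v^T S_hat v) is at least 1/2. -/

import Mathlib

open Matrix

/-- The old Mathlib `Matrix.PosSemidef.sqrt` (removed since), restored with its original definition. -/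
noncomputable def Matrix.PosSemidef.sqrt {n : Type*} [Fintype n] [DecidableEq n]
    {A : Matrix n n ℝ} (hA : A.PosSemidef) : Matrix n n ℝ :=
  hA.1.eigenvectorUnitary.1 * diagonal ((↑) ∘ (hA.1.eigenvalues · |>.sqrt)) *
    (star hA.1.eigenvectorUnitary : Matrix n n ℝ)

lemma Matrix.PosSemidef.posSemidef_sqrt {n : Type*} [Fintype n] [DecidableEq n]
    {A : Matrix n n ℝ} (hA : A.PosSemidef) : hA.sqrt.PosSemidef := by
  unfold Matrix.PosSemidef.sqrt
  have h := (Matrix.PosSemidef.diagonal (d := fun i => Real.sqrt (hA.1.eigenvalues i))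
    (fun i => Real.sqrt_nonneg _)).mul_mul_conjTranspose_same (hA.1.eigenvectorUnitary.1)
  exact h

lemma Matrix.PosSemidef.sqrt_mul_self {n : Type*} [Fintype n] [DecidableEq n]
    {A : Matrix n n ℝ} (hA : A.PosSemidef) : hA.sqrt * hA.sqrt = A := by
  unfold Matrix.PosSemidef.sqrt
  have hU : (star hA.1.eigenvectorUnitary : Matrix n n ℝ) * hA.1.eigenvectorUnitary.1 = 1 :=
    Unitary.coe_star_mul_self _
  change hA.1.eigenvectorUnitary.1 * diagonal (fun i => Real.sqrt (hA.1.eigenvalues i)) *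
    (star hA.1.eigenvectorUnitary : Matrix n n ℝ) *
    (hA.1.eigenvectorUnitary.1 * diagonal (fun i => Real.sqrt (hA.1.eigenvalues i)) *
    (star hA.1.eigenvectorUnitary : Matrix n n ℝ)) = A
  have hD : diagonal (fun i => Real.sqrt (hA.1.eigenvalues i)) *
      diagonal (fun i => Real.sqrt (hA.1.eigenvalues i)) = diagonal (RCLike.ofReal ∘ hA.1.eigenvalues)
      := by
    rw [diagonal_mul_diagonal]
    congr 1; funext i
    simp [Real.mul_self_sqrt (hA.eigenvalues_nonneg i)]
  calc _ = hA.1.eigenvectorUnitary.1 * (diagonal (fun i => Real.sqrt (hA.1.eigenvalues i)) *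
        ((star hA.1.eigenvectorUnitary : Matrix n n ℝ) * hA.1.eigenvectorUnitary.1) *
        diagonal (fun i => Real.sqrt (hA.1.eigenvalues i))) *
        (star hA.1.eigenvectorUnitary : Matrix n n ℝ) := by simp only [Matrix.mul_assoc]
    _ = A := by
      rw [hU, Matrix.mul_one, hD]
      conv_rhs => rw [hA.1.spectral_theorem]
      rfl

private lemma dp_self_nonneg {n : ℕ} (v : Fin n → ℝ) : 0 ≤ v ⬝ᵥ v :=
  Finset.sum_nonneg fun i _ => mul_self_nonneg (v i)

private lemma quad_form_eq {n : ℕ} (B R : Matrix (Fin n) (Fin n) ℝ) (hR : Rᵀ = R)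
    (v : Fin n → ℝ) :
    v ⬝ᵥ (B * (R * R) * Bᵀ).mulVec v
      = (R.mulVec (Bᵀ.mulVec v)) ⬝ᵥ (R.mulVec (Bᵀ.mulVec v)) := by
  have hC : B * (R * R) * Bᵀ = (B * R) * (B * R)ᵀ := by
    rw [transpose_mul, hR]; noncomm_ring
  rw [hC, ← mulVec_mulVec, dotProduct_mulVec, ← transpose_transpose (B * R),
    vecMul_transpose, transpose_transpose, transpose_mul, hR, ← mulVec_mulVec]

set_option maxHeartbeats 1000000 in
theorem stmt_2 (n m : ℕ) (A : Matrix (Fin n) (Fin n) ℝ) (J : Matrix (Fin n) (Fin m) ℝ)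
    (Mhat : Matrix (Fin n) (Fin n) ℝ) (W : Matrix (Fin m) (Fin m) ℝ)
    (hMhat : Mhat.PosDef) (hW : W.PosDef) (β τ : ℝ) (hβ : 0 < β) (hτ : 0 < τ)
    (hJ : (J * W⁻¹ * Jᵀ).PosSemidef)
    (M1 : Matrix (Fin n) (Fin n) ℝ)
    (hM1 : M1 = (Real.sqrt (β * τ))⁻¹ • (hJ.sqrt * hMhat.posSemidef.sqrt))
    (S Shat : Matrix (Fin n) (Fin n) ℝ)
    (hS : S = A * Mhat⁻¹ * Aᵀ + (1 / (β * τ)) • (J * W⁻¹ * Jᵀ))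
    (hShat : Shat = (A + M1) * Mhat⁻¹ * (Aᵀ + M1ᵀ))
    (v : Fin n → ℝ) (hv : Shat.mulVec v ≠ 0) :
    (v ⬝ᵥ S.mulVec v) / (v ⬝ᵥ Shat.mulVec v) ≥ 1 / 2 := by
  have hβτ : 0 < β * τ := mul_pos hβ hτ
  -- N = Mhat⁻¹ is positive definite; R its psd square root
  have hN : (Mhat⁻¹).PosDef := hMhat.inv
  set R : Matrix (Fin n) (Fin n) ℝ := hN.posSemidef.sqrt with hRdef
  have hRR : R * R = Mhat⁻¹ := hN.posSemidef.sqrt_mul_self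
  have hRsym : Rᵀ = R := by
    have := hN.posSemidef.posSemidef_sqrt.1
    rwa [Matrix.IsHermitian, conjTranspose_eq_transpose_of_trivial] at this
  -- Q = sqrt of Mhat, K = sqrt of J W⁻¹ Jᵀ
  set Q : Matrix (Fin n) (Fin n) ℝ := hMhat.posSemidef.sqrt with hQdef
  set K : Matrix (Fin n) (Fin n) ℝ := hJ.sqrt with hKdef
  have hQQ : Q * Q = Mhat := hMhat.posSemidef.sqrt_mul_self
  have hKK : K * K = J * W⁻¹ * Jᵀ := hJ.sqrt_mul_self
  have hQsym : Qᵀ = Q := by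
    have := hMhat.posSemidef.posSemidef_sqrt.1
    rwa [Matrix.IsHermitian, conjTranspose_eq_transpose_of_trivial] at this
  have hKsym : Kᵀ = K := by
    have := hJ.posSemidef_sqrt.1
    rwa [Matrix.IsHermitian, conjTranspose_eq_transpose_of_trivial] at this
  -- Q is invertible
  have hMdet : IsUnit Mhat.det := (Matrix.isUnit_iff_isUnit_det Mhat).mp hMhat.isUnit
  have hQdet : IsUnit Q.det := by
    have : Q.det * Q.det = Mhat.det := by rw [← det_mul, hQQ]
    exact isUnit_of_mul_isUnit_left (this ▸ hMdet)
  have hQinv : Q * Mhat⁻¹ * Q = 1 := by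
    rw [← hQQ, Matrix.mul_inv_rev]
    calc Q * (Q⁻¹ * Q⁻¹) * Q = (Q * Q⁻¹) * (Q⁻¹ * Q) := by noncomm_ring
      _ = 1 := by
        rw [Matrix.mul_nonsing_inv Q hQdet, Matrix.nonsing_inv_mul Q hQdet, Matrix.one_mul]
  -- M1 Mhat⁻¹ M1ᵀ = (1/(βτ)) • J W⁻¹ Jᵀ
  have hsq : (Real.sqrt (β * τ))⁻¹ * (Real.sqrt (β * τ))⁻¹ = 1 / (β * τ) := by
    rw [← mul_inv, Real.mul_self_sqrt hβτ.le, one_div]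
  have hM1N : M1 * Mhat⁻¹ * M1ᵀ = (1 / (β * τ)) • (J * W⁻¹ * Jᵀ) := by
    rw [hM1, transpose_smul, transpose_mul, hQsym, hKsym]
    rw [Matrix.smul_mul, Matrix.mul_smul, Matrix.smul_mul, smul_smul, hsq]
    rw [Matrix.mul_assoc K Q Mhat⁻¹, Matrix.mul_assoc K (Q * Mhat⁻¹) (Q * K),
      ← Matrix.mul_assoc (Q * Mhat⁻¹) Q K, hQinv, Matrix.one_mul, hKK]
  -- vectors
  set x : Fin n → ℝ := R.mulVec (Aᵀ.mulVec v) with hx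
  set y : Fin n → ℝ := R.mulVec (M1ᵀ.mulVec v) with hy
  have hnum : v ⬝ᵥ S.mulVec v = x ⬝ᵥ x + y ⬝ᵥ y := by
    rw [hS, ← hM1N, ← hRR, add_mulVec, dotProduct_add,
      quad_form_eq A R hRsym v, quad_form_eq M1 R hRsym v]
  have hden : v ⬝ᵥ Shat.mulVec v = (x + y) ⬝ᵥ (x + y) := by
    have : Shat = (A + M1) * (R * R) * (A + M1)ᵀ := by
      rw [hShat, hRR, transpose_add]
    rw [this, quad_form_eq (A + M1) R hRsym v, transpose_add, add_mulVec, mulVec_add]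
  -- denominator positive
  have hdpos : 0 < v ⬝ᵥ Shat.mulVec v := by
    rcases lt_or_eq_of_le ((hden ▸ dp_self_nonneg (x + y)) :
        (0:ℝ) ≤ v ⬝ᵥ Shat.mulVec v) with h | h
    · exact h
    exfalso
    apply hv
    have hz : x + y = 0 := by
      have := hden ▸ h.symm
      exact (dotProduct_self_eq_zero).mp this
    have hw : (Mhat⁻¹).mulVec ((Aᵀ + M1ᵀ).mulVec v) = 0 := by
      rw [← hRR, ← mulVec_mulVec]
      have : R.mulVec ((Aᵀ + M1ᵀ).mulVec v) = x + y := by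
        rw [add_mulVec, mulVec_add]
      rw [this, hz, mulVec_zero]
    rw [hShat, ← mulVec_mulVec, ← mulVec_mulVec, hw, mulVec_zero]
  -- the inequality
  have hsub : 0 ≤ (x - y) ⬝ᵥ (x - y) := dp_self_nonneg _
  have hbil : (x + y) ⬝ᵥ (x + y) + (x - y) ⬝ᵥ (x - y) = 2 * (x ⬝ᵥ x + y ⬝ᵥ y) := by
    simp only [dotProduct_add, add_dotProduct, dotProduct_sub, sub_dotProduct,
      dotProduct_comm y x]
    ring
  rw [ge_iff_le, le_div_iff₀ hdpos, hnum, hden]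
  nlinarith [hsub, hbil]
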